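/- Let Ω ⊆ ℂ be a connected open set, δ > 0, and let q : Ω × B_ℂ(0,δ) → ℂ be a (jointly) complex analytic function such that q(λ, 0) = 0 for every λ ∈ Ω, and suppose there exists δ' ∈ (0,δ) such that for every λ ∈ Ω, q(λ, x) ≠ 0 whenever 0 < |x| ≤ δ'. Then the order of vanishing at x = 0 of the one-variable analytic function x ↦ q(λ, x) is finite and is the same for all λ ∈ Ω. -/

import Mathlib

open Filter Topology

open Metric Complex in
/-- Argument principle type lemma: for `f` analytic on a disc, vanishing at `0` and
nonvanishing on the punctured disc of radius `δ'`, there is `m : ℕ` which is the order of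
vanishing at `0` (in terms of iterated derivatives) and which computes the circle integral
of the logarithmic derivative over the circle of radius `δ'`. -/
lemma key_arg (f : ℂ → ℂ) {δ δ' : ℝ} (hδ'0 : 0 < δ') (hδ'δ : δ' < δ)
    (hfa : AnalyticOnNhd ℂ f (Metric.ball 0 δ)) (hf0 : f 0 = 0)
    (hnz : ∀ x : ℂ, 0 < ‖x‖ → ‖x‖ ≤ δ' → f x ≠ 0) :
    ∃ m : ℕ, ((∀ j < m, iteratedDeriv j f 0 = 0) ∧ iteratedDeriv m f 0 ≠ 0) ∧
      (∮ z in C(0, δ'), deriv f z / f z) = 2 * Real.pi * Complex.I * m := by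
  have hδ0 : (0:ℝ) < δ := hδ'0.trans hδ'δ
  have h0mem : (0:ℂ) ∈ ball (0:ℂ) δ := by simpa using hδ0
  obtain ⟨p, hp⟩ := hfa 0 h0mem
  obtain ⟨r, hball⟩ := hp
  have hp : HasFPowerSeriesAt f p 0 := ⟨r, hball⟩
  -- p is nonzero
  have hpne : p ≠ 0 := by
    intro h
    have hev : ∀ᶠ z in 𝓝 (0:ℂ), f z = 0 := hp.locally_zero_iff.mpr h
    rw [Metric.eventually_nhds_iff] at hev
    obtain ⟨ε, hε, hev⟩ := hev
    set t : ℝ := min (ε/2) δ' with ht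
    have ht0 : 0 < t := lt_min (by linarith) hδ'0
    have hxno : ‖(t:ℂ)‖ = t := by
      simp [Complex.norm_real, abs_of_pos ht0]
    refine hnz (t:ℂ) (by rw [hxno]; exact ht0) (by rw [hxno]; exact min_le_right _ _) ?_
    apply hev
    simp only [dist_zero_right, hxno]
    exact lt_of_le_of_lt (min_le_left _ _) (by linarith)
  set m : ℕ := p.order with hmdef
  -- Iterated derivative description
  have hcoef : ∀ n : ℕ, iteratedDeriv n f 0 = (n.factorial : ℂ) * p.coeff n := by
    intro n
    have := hball.factorial_smul (y := (1:ℂ)) n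
    rw [iteratedDeriv_eq_iteratedFDeriv, ← this, nsmul_eq_mul]
    rfl
  have hiter : (∀ j < m, iteratedDeriv j f 0 = 0) ∧ iteratedDeriv m f 0 ≠ 0 := by
    constructor
    · intro j hj
      rw [hcoef]
      have : p j = 0 := p.apply_eq_zero_of_lt_order hj
      simp [FormalMultilinearSeries.coeff_eq_zero.mpr this]
    · rw [hcoef]
      have : p m ≠ 0 := p.apply_order_ne_zero hpne
      have h2 : p.coeff m ≠ 0 := by
        simpa [ne_eq, FormalMultilinearSeries.coeff_eq_zero] using this
      exact mul_ne_zero (by exact_mod_cast Nat.factorial_ne_zero m) h2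
  have hm : 0 < m := by
    rcases Nat.eq_zero_or_pos m with h | h
    · exfalso
      apply hiter.2
      rw [h]
      simpa using hf0
    · exact h
  -- the analytic unit `G`
  set G : ℂ → ℂ := (Function.swap dslope 0)^[m] f with hGdef
  have hG : AnalyticAt ℂ G 0 := ⟨_, hp.has_fpower_series_iterate_dslope_fslope m⟩
  have hG0 : G 0 ≠ 0 := hp.iterate_dslope_fslope_ne_zero hpne
  have heq : ∀ᶠ z in 𝓝 (0:ℂ), f z = z ^ m • G z := by
    filter_upwards [Filter.Eventually.of_forall hp.eq_pow_order_mul_iterate_dslope] with z hz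
    simpa using hz
  -- define the global unit g
  set g : ℂ → ℂ := fun z => if z = 0 then G 0 else f z / z ^ m with hgdef
  have hg_an : AnalyticOnNhd ℂ g (ball (0:ℂ) δ) := by
    intro z hz
    by_cases hz0 : z = 0
    · subst hz0
      apply hG.congr
      filter_upwards [heq] with x hx
      by_cases hx0 : x = 0
      · simp [hgdef, hx0]
      · have hxm : (x:ℂ) ^ m ≠ 0 := pow_ne_zero _ hx0
        simp only [hgdef, if_neg hx0, hx, smul_eq_mul]
        field_simp
    · have h1 : AnalyticAt ℂ (fun w => f w / w ^ m) z :=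
        (hfa z hz).div ((analyticAt_id (𝕜 := ℂ)).pow m) (pow_ne_zero _ hz0)
      apply h1.congr
      filter_upwards [compl_singleton_mem_nhds hz0] with x hx
      simp [hgdef, if_neg (by simpa using hx)]
  have hgno : ∀ z ∈ closedBall (0:ℂ) δ', g z ≠ 0 := by
    intro z hz
    by_cases hz0 : z = 0
    · simpa [hgdef, hz0] using hG0
    · have h1 : 0 < ‖z‖ := by simpa [norm_pos_iff] using hz0
      have h2 : ‖z‖ ≤ δ' := by simpa [dist_eq_norm] using hz
      simp only [hgdef, if_neg hz0]
      exact div_ne_zero (hnz z h1 h2) (pow_ne_zero _ hz0)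
  have hfg : ∀ z ∈ ball (0:ℂ) δ, f z = z ^ m * g z := by
    intro z _
    by_cases hz0 : z = 0
    · simp [hz0, hf0, zero_pow hm.ne']
    · have hxm : (z:ℂ) ^ m ≠ 0 := pow_ne_zero _ hz0
      simp only [hgdef, if_neg hz0]
      field_simp
  have hball' : closedBall (0:ℂ) δ' ⊆ ball (0:ℂ) δ := closedBall_subset_ball hδ'δ
  have hg' : AnalyticOnNhd ℂ (deriv g) (ball (0:ℂ) δ) := hg_an.deriv
  have hderiv : ∀ z ∈ ball (0:ℂ) δ,
      HasDerivAt f ((m : ℂ) * z ^ (m-1) * g z + z ^ m * deriv g z) z := by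
    intro z hz
    have h1 : HasDerivAt (fun w => w ^ m * g w)
        ((m : ℂ) * z ^ (m-1) * g z + z ^ m * deriv g z) z :=
      (hasDerivAt_pow m z).mul ((hg_an z hz).differentiableAt.hasDerivAt)
    apply h1.congr_of_eventuallyEq
    filter_upwards [isOpen_ball.mem_nhds hz] with x hx
    exact hfg x hx
  -- pointwise identity on the circle
  have hsphere_ball : Metric.sphere (0:ℂ) δ' ⊆ ball (0:ℂ) δ := fun z hz => by
    simp only [mem_sphere_iff_norm, sub_zero] at hz
    simp [mem_ball, dist_eq_norm, hz, hδ'δ]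
  have hpt : ∀ z ∈ Metric.sphere (0:ℂ) δ',
      deriv f z / f z = (m : ℂ) * z⁻¹ + deriv g z / g z := by
    intro z hz
    have hzn : ‖z‖ = δ' := by simpa [dist_eq_norm] using hz
    have hz0 : z ≠ 0 := by
      intro h; rw [h] at hzn; simp at hzn; exact hδ'0.ne' hzn.symm
    have hzb : z ∈ ball (0:ℂ) δ := hsphere_ball hz
    have hgz : g z ≠ 0 := hgno z (by simp [mem_closedBall, dist_eq_norm, hzn])
    have hfz : f z ≠ 0 := hnz z (by simpa [norm_pos_iff] using hz0) (le_of_eq hzn)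
    have hdf : deriv f z = (m : ℂ) * z ^ (m-1) * g z + z ^ m * deriv g z :=
      (hderiv z hzb).deriv
    have hfzz : f z = z ^ m * g z := hfg z hzb
    have hzm : z ^ m = z * z ^ (m-1) := by
      conv_lhs => rw [show m = (m-1)+1 from (Nat.succ_pred_eq_of_pos hm).symm]
      ring
    rw [hdf, hfzz, hzm]
    field_simp
  -- compute the integral
  have hgc_cb : ContinuousOn (fun z => deriv g z / g z) (closedBall (0:ℂ) δ') := by
    apply ContinuousOn.div
    · exact fun z hz => ((hg' z (hball' hz)).continuousAt).continuousWithinAt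
    · exact fun z hz => ((hg_an z (hball' hz)).continuousAt).continuousWithinAt
    · exact hgno
  have hint2 : (∮ z in C(0, δ'), deriv g z / g z) = 0 := by
    apply Complex.circleIntegral_eq_zero_of_differentiable_on_off_countable hδ'0.le
      Set.countable_empty hgc_cb
    rintro z ⟨hz, -⟩
    have hzb : z ∈ ball (0:ℂ) δ := hball' (ball_subset_closedBall hz)
    exact ((hg' z hzb).differentiableAt).div ((hg_an z hzb).differentiableAt)
      (hgno z (ball_subset_closedBall hz))
  have hi1 : CircleIntegrable (fun z : ℂ => (m : ℂ) * z⁻¹) 0 δ' := by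
    apply ContinuousOn.circleIntegrable hδ'0.le
    apply ContinuousOn.mul continuousOn_const
    intro z hz
    have hz0 : z ≠ 0 := by
      intro h
      rw [h] at hz
      simp only [mem_sphere_iff_norm, sub_zero, norm_zero] at hz
      exact hδ'0.ne' hz.symm
    exact (continuousAt_inv₀ hz0).continuousWithinAt
  have hi2 : CircleIntegrable (fun z => deriv g z / g z) 0 δ' :=
    ContinuousOn.circleIntegrable hδ'0.le (hgc_cb.mono sphere_subset_closedBall)
  have hmain : (∮ z in C(0, δ'), deriv f z / f z) = 2 * Real.pi * Complex.I * m := by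
    have hadd : (∮ z in C(0, δ'), ((m:ℂ) * z⁻¹ + deriv g z / g z)) =
        (∮ z in C(0, δ'), (m:ℂ) * z⁻¹) + ∮ z in C(0, δ'), deriv g z / g z := by
      simp only [circleIntegral, smul_add]
      exact intervalIntegral.integral_add hi1.out hi2.out
    rw [circleIntegral.integral_congr hδ'0.le hpt, hadd, hint2,
      add_zero, circleIntegral.integral_const_mul]
    have := circleIntegral.integral_sub_inv_of_mem_ball
      (c := (0:ℂ)) (w := (0:ℂ)) (R := δ') (by simpa using hδ'0)
    simp only [sub_zero] at this
    rw [this]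
    ring
  exact ⟨m, hiter, hmain⟩

theorem stmt9 (Ω : Set ℂ) (hΩo : IsOpen Ω) (hΩc : IsConnected Ω)
    (δ : ℝ) (hδ : 0 < δ) (q : ℂ → ℂ → ℂ)
    (hq : AnalyticOnNhd ℂ (fun p : ℂ × ℂ => q p.1 p.2) (Ω ×ˢ Metric.ball 0 δ))
    (hq0 : ∀ lam ∈ Ω, q lam 0 = 0)
    (δ' : ℝ) (hδ'0 : 0 < δ') (hδ'δ : δ' < δ)
    (hnz : ∀ lam ∈ Ω, ∀ x : ℂ, 0 < ‖x‖ → ‖x‖ ≤ δ' → q lam x ≠ 0) :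
    -- the order of vanishing at `x = 0` of `x ↦ q lam x` is finite and the same
    -- for all `lam ∈ Ω`
    ∃ m : ℕ, ∀ lam ∈ Ω,
      (∀ j < m, iteratedDeriv j (q lam) 0 = 0) ∧ iteratedDeriv m (q lam) 0 ≠ 0 := by
  classical
  set Q : ℂ × ℂ → ℂ := fun p => q p.1 p.2 with hQdef
  -- each slice is analytic
  have hfa : ∀ lam ∈ Ω, AnalyticOnNhd ℂ (q lam) (Metric.ball (0:ℂ) δ) := by
    intro lam hlam x hx
    have h1 : AnalyticAt ℂ Q (lam, x) := hq (lam, x) ⟨hlam, hx⟩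
    have h2 : AnalyticAt ℂ (fun y : ℂ => ((lam, y) : ℂ × ℂ)) x :=
      analyticAt_const.prod analyticAt_id
    exact h1.comp h2
  -- key lemma applied to each lam
  have K : ∀ lam : Ω, ∃ m : ℕ,
      ((∀ j < m, iteratedDeriv j (q lam) 0 = 0) ∧ iteratedDeriv m (q lam) 0 ≠ 0) ∧
      (∮ z in C(0, δ'), deriv (q lam) z / q lam z) = 2 * Real.pi * Complex.I * m :=
    fun lam => key_arg (q lam) hδ'0 hδ'δ (hfa lam lam.2) (hq0 lam lam.2) (hnz lam lam.2)
  set μ : Ω → ℕ := fun lam => (K lam).choose with hμdef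
  have hμspec := fun lam => (K lam).choose_spec
  -- partial derivative in the second variable
  set D : ℂ × ℂ → ℂ := fun p => fderiv ℂ Q p (0, 1) with hDdef
  have hDc : ContinuousOn D (Ω ×ˢ Metric.ball 0 δ) := by
    have h1 : AnalyticOnNhd ℂ (fderiv ℂ Q) (Ω ×ˢ Metric.ball 0 δ) :=
      hq.fderiv
    have h2 : ContinuousOn (fderiv ℂ Q) (Ω ×ˢ Metric.ball 0 δ) :=
      fun p hp => (h1 p hp).continuousAt.continuousWithinAt
    exact (ContinuousLinearMap.apply ℂ ℂ ((0:ℂ), (1:ℂ))).continuous.comp_continuousOn h2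
  have hQc : ContinuousOn Q (Ω ×ˢ Metric.ball 0 δ) :=
    fun p hp => (hq p hp).continuousAt.continuousWithinAt
  have hderiv_eq : ∀ lam ∈ Ω, ∀ z ∈ Metric.ball (0:ℂ) δ, deriv (q lam) z = D (lam, z) := by
    intro lam hlam z hz
    have hQd : DifferentiableAt ℂ Q (lam, z) := (hq (lam, z) ⟨hlam, hz⟩).differentiableAt
    have hi : HasDerivAt (fun y : ℂ => ((lam, y) : ℂ × ℂ)) ((0:ℂ), (1:ℂ)) z :=
      (hasDerivAt_const z lam).prodMk (hasDerivAt_id z)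
    exact (hQd.hasFDerivAt.comp_hasDerivAt z hi).deriv
  have hsphere_ball : Metric.sphere (0:ℂ) δ' ⊆ Metric.ball (0:ℂ) δ := fun z hz => by
    simp only [mem_sphere_iff_norm, sub_zero] at hz
    simp [Metric.mem_ball, dist_eq_norm, hz, hδ'δ]
  -- continuity of the integral in lam
  have hS : (Ω ×ˢ Metric.sphere (0:ℂ) δ') ⊆ Ω ×ˢ Metric.ball 0 δ :=
    Set.prod_mono subset_rfl hsphere_ball
  have hH : ContinuousOn (fun p => D p / Q p) (Ω ×ˢ Metric.sphere (0:ℂ) δ') := by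
    apply ContinuousOn.div (hDc.mono hS) (hQc.mono hS)
    rintro ⟨lam, z⟩ ⟨hlam, hz⟩
    have hzn : ‖z‖ = δ' := by simpa [dist_eq_norm] using hz
    exact hnz lam hlam z (by rw [hzn]; exact hδ'0) (le_of_eq hzn)
  set F : Ω × ℝ → ℂ := fun w =>
    (circleMap 0 δ' w.2 * Complex.I) • ((fun p => D p / Q p) ((w.1 : ℂ), circleMap 0 δ' w.2))
    with hFdef
  have hFc : Continuous F := by
    apply Continuous.fun_smul
    · exact ((continuous_circleMap 0 δ').comp continuous_snd).mul continuous_const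
    · apply hH.comp_continuous
      · exact (continuous_subtype_val.comp continuous_fst).prodMk
          ((continuous_circleMap 0 δ').comp continuous_snd)
      · rintro ⟨lam, θ⟩
        exact ⟨lam.2, circleMap_mem_sphere 0 hδ'0.le θ⟩
  set ν : Ω → ℂ := fun lam => ∫ θ in (0:ℝ)..(2 * Real.pi), F (lam, θ) with hνdef
  have hνc : Continuous ν :=
    intervalIntegral.continuous_parametric_intervalIntegral_of_continuous'
      (f := fun lam θ => F (lam, θ)) hFc 0 (2 * Real.pi)
  have hν_eq : ∀ lam : Ω, ν lam = 2 * Real.pi * Complex.I * μ lam := by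
    intro lam
    have h1 : ν lam = ∮ z in C(0, δ'), deriv (q lam) z / q lam z := by
      rw [circleIntegral]
      apply intervalIntegral.integral_congr
      intro θ _
      have hmem : circleMap 0 δ' θ ∈ Metric.ball (0:ℂ) δ :=
        hsphere_ball (circleMap_mem_sphere 0 hδ'0.le θ)
      simp only [hνdef, hFdef, deriv_circleMap]
      rw [hderiv_eq lam lam.2 _ hmem]
    rw [h1, (hμspec lam).2]
  -- local constancy of μ
  have hnorm2pi : ‖(2 * (Real.pi:ℂ) * Complex.I)‖ = 2 * Real.pi := by
    simp [Complex.norm_real, map_mul, Complex.norm_I, Real.norm_eq_abs,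
      abs_of_pos Real.pi_pos]
  have hμlc : IsLocallyConstant μ := by
    rw [IsLocallyConstant.iff_eventually_eq]
    intro x
    have hball : Metric.ball (ν x) (2 * Real.pi) ∈ 𝓝 (ν x) :=
      Metric.ball_mem_nhds _ (by positivity)
    filter_upwards [hνc.continuousAt.preimage_mem_nhds hball] with y hy
    by_contra hne
    have h1 : ν y - ν x = 2 * Real.pi * Complex.I * ((μ y : ℂ) - (μ x : ℂ)) := by
      rw [hν_eq x, hν_eq y]; ring
    have h2 : (1:ℝ) ≤ ‖(μ y : ℂ) - (μ x : ℂ)‖ := by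
      have hz : ((μ y : ℤ) - (μ x : ℤ)) ≠ 0 := by
        simp only [ne_eq, sub_eq_zero]
        exact_mod_cast hne
      have h4 : (1:ℝ) ≤ ‖(((μ y : ℤ) - (μ x : ℤ) : ℤ) : ℂ)‖ := by
        rw [Complex.norm_intCast]
        exact_mod_cast Int.one_le_abs hz
      convert h4 using 2
      push_cast
      ring
    have h3 : dist (ν y) (ν x) < 2 * Real.pi := hy
    rw [dist_eq_norm, h1] at h3
    rw [norm_mul, hnorm2pi] at h3
    nlinarith [Real.pi_pos]
  -- constancy on the connected set
  have : ConnectedSpace Ω := Subtype.connectedSpace hΩc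
  obtain ⟨lam0, hlam0⟩ := hΩc.nonempty
  refine ⟨μ ⟨lam0, hlam0⟩, fun lam hlam => ?_⟩
  have hc : μ ⟨lam, hlam⟩ = μ ⟨lam0, hlam0⟩ :=
    hμlc.apply_eq_of_preconnectedSpace ⟨lam, hlam⟩ ⟨lam0, hlam0⟩
  rw [← hc]
  exact (hμspec ⟨lam, hlam⟩).1
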